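/- arXiv:2603.20972 — 3 statements merged into one kernel-verified Lean document; each statement's English description precedes it below -/
import Mathlib

section
/- For any symmetric positive definite matrix Σ ∈ ℝ^{d×d}, there exists a constant C (depending on d and Σ) such that the Gaussian k-point distortion satisfies D_k(Σ) ≤ C k^{−2/d} for all k ≥ 1; that is, the full-information gap V_∞* − V_k* = (1/2)D_k(Σ) is O(k^{−2/d}) as k → ∞. -/
open MeasureTheory ProbabilityTheory Matrix
open scoped ENNReal NNReal BigOperators Classical

set_option maxHeartbeats 1000000

/-- The standard Gaussian measure on `ℝ^d` (i.i.d. standard normal coordinates). -/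
noncomputable def stdGaussian (d : ℕ) : Measure (Fin d → ℝ) :=
  Measure.pi fun _ => gaussianReal 0 1

/-- The positive semidefinite square root of a PSD matrix (the former `Matrix.PosSemidef.sqrt`). -/
noncomputable def posSemidefSqrt {d : ℕ} {S : Matrix (Fin d) (Fin d) ℝ} (hS : S.PosSemidef) :
    Matrix (Fin d) (Fin d) ℝ :=
  (hS.1.eigenvectorUnitary : Matrix (Fin d) (Fin d) ℝ) *
    diagonal ((↑) ∘ Real.sqrt ∘ hS.1.eigenvalues) *
    (star hS.1.eigenvectorUnitary : Matrix (Fin d) (Fin d) ℝ)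

/-- The multivariate Gaussian measure `N(μ, S)` on `ℝ^d`, defined as the pushforward of the
standard Gaussian under `x ↦ μ + S^{1/2} x` (junk value `0` if `S` is not PSD). -/
noncomputable def mvGaussian {d : ℕ} (μ : Fin d → ℝ) (S : Matrix (Fin d) (Fin d) ℝ) :
    Measure (Fin d → ℝ) :=
  if hS : S.PosSemidef then (stdGaussian d).map (fun x => μ + (posSemidefSqrt hS).mulVec x) else 0

/-- Squared Euclidean distance on `ℝ^d`. -/
def sqdist {d : ℕ} (a b : Fin d → ℝ) : ℝ := ∑ i, (a i - b i) ^ 2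

/-- The Gaussian `k`-point distortion
`D_k(Σ) = inf_{x₁,…,x_k} E_{ξ ~ N(0,Σ)}[min_j ‖ξ − x_j‖²]`. -/
noncomputable def Dk {d : ℕ} (k : ℕ) (S : Matrix (Fin d) (Fin d) ℝ) : ℝ :=
  ⨅ x : Fin k → (Fin d → ℝ), ∫ ξ, (⨅ j, sqdist ξ (x j)) ∂(mvGaussian 0 S)


noncomputable def phi (u : ℝ) : ℝ := u / (1 - u ^ 2)

lemma phi_neg (u : ℝ) : phi (-u) = - phi u := by
  simp [phi, neg_div, neg_sq]


lemma sq_le_of_mul_eq (e D p N En : ℝ) (hkey : e * D = N) (hD : 1 ≤ D * p ^ 2)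
    (hN : N ^ 2 ≤ En) (hEn : 0 ≤ En) : e ^ 2 ≤ En * (p ^ 2) ^ 2 := by
  have hx2 : 1 ≤ (D * p ^ 2) ^ 2 := by nlinarith [hD]
  have h1 : e ^ 2 ≤ e ^ 2 * (D * p ^ 2) ^ 2 := le_mul_of_one_le_right (sq_nonneg e) hx2
  calc e ^ 2 ≤ e ^ 2 * (D * p ^ 2) ^ 2 := h1
    _ = (e * D) ^ 2 * (p ^ 2) ^ 2 := by ring
    _ = N ^ 2 * (p ^ 2) ^ 2 := by rw [hkey]
    _ ≤ En * (p ^ 2) ^ 2 := mul_le_mul_of_nonneg_right hN (by positivity)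

lemma key_nonneg (n : ℕ) (hn : 1 ≤ n) (s : ℝ) (hs : 0 ≤ s) :
    ∃ j : ℤ, 0 ≤ j ∧ j ≤ (n : ℤ) - 1 ∧
      (s - phi ((j : ℝ) / n)) ^ 2 ≤ 64 * (1 + s ^ 4) / (n : ℝ) ^ 2 := by
  have hn0 : (0:ℝ) < n := by exact_mod_cast hn
  set r := Real.sqrt (1 + 4 * s ^ 2) with hr_def
  have hr0 : 0 ≤ r := Real.sqrt_nonneg _
  have hr2 : r ^ 2 = 1 + 4 * s ^ 2 := Real.sq_sqrt (by positivity)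
  have hr1 : 1 ≤ r := by nlinarith
  have hden : (0:ℝ) < 1 + r := by linarith
  set u := 2 * s / (1 + r) with hu_def
  have hu0 : 0 ≤ u := by positivity
  have h4s : (2*s)^2 = (r-1)*(r+1) := by nlinarith [hr2]
  have h1u : 1 - u ^ 2 = 2 / (1 + r) := by
    rw [hu_def, div_pow, h4s]
    field_simp
    ring
  have hu1 : u ^ 2 < 1 := by
    have : (0:ℝ) < 2 / (1 + r) := by positivity
    linarith [h1u]
  have hsu : s * (1 - u ^ 2) = u := by
    rw [h1u, hu_def]; field_simp
  have hqle : (1 + r) / 2 ≤ 1 + s := by nlinarith [hr2]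
  set j : ℤ := ⌊u * n⌋ with hj_def
  have hj0 : 0 ≤ j := Int.floor_nonneg.2 (by positivity)
  have hjle : (j:ℝ) ≤ u * n := Int.floor_le _
  have hjlt : u * n < (j:ℝ) + 1 := Int.lt_floor_add_one _
  have hu_lt1 : u < 1 := by nlinarith
  have hjtop : j ≤ (n : ℤ) - 1 := by
    have h1 : (j:ℝ) < (n:ℝ) := lt_of_le_of_lt hjle (by nlinarith)
    have : j < (n:ℤ) := by exact_mod_cast h1
    omega
  refine ⟨j, hj0, hjtop, ?_⟩
  set w : ℝ := (j:ℝ) / n with hw_def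
  have hw0 : 0 ≤ w := by positivity
  have hwu : w ≤ u := by rw [hw_def, div_le_iff₀ hn0]; linarith
  have huw : u - w ≤ 1 / n := by
    have h' : u ≤ ((j:ℝ) + 1) / n := by rw [le_div_iff₀ hn0]; linarith
    have h'' : ((j:ℝ)+1)/n - (j:ℝ)/n = 1/n := by rw [div_sub_div_same]; ring_nf
    rw [hw_def]; linarith
  clear_value w j u r
  have hw1 : w ^ 2 ≤ u ^ 2 := by nlinarith
  have hwlt : w ^ 2 < 1 := lt_of_le_of_lt hw1 hu1
  have hDw : (0:ℝ) < 1 - w ^ 2 := by linarith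
  have hDu : (0:ℝ) < 1 - u ^ 2 := by linarith
  have hphi : phi w * (1 - w ^ 2) = w := by
    rw [phi]; exact div_mul_cancel₀ _ hDw.ne'
  have hkey : (s - phi w) * ((1 - u ^ 2) * (1 - w ^ 2)) = (u - w) * (1 + u * w) := by
    linear_combination (1 - w^2) * hsu - (1 - u^2) * hphi
  have h0s : (0:ℝ) < 1 + s := by linarith
  have h2 : 1 / (1 + s) ≤ 1 - u ^ 2 := by
    rw [h1u, div_le_div_iff₀ h0s hden]
    linarith [hqle]
  have h2w : 1 / (1 + s) ≤ 1 - w ^ 2 := le_trans h2 (by linarith)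
  have h2' : 1 ≤ (1 - u^2) * (1+s) := by
    rw [div_le_iff₀ h0s] at h2; linarith [h2]
  have h2w' : 1 ≤ (1 - w^2) * (1+s) := by
    rw [div_le_iff₀ h0s] at h2w; linarith [h2w]
  have hD1 : 1 ≤ ((1 - u^2) * (1 - w^2)) * (1 + s)^2 := by nlinarith [h2', h2w']
  have hN : ((u - w) * (1 + u * w)) ^ 2 ≤ 4 / (n:ℝ) ^ 2 := by
    have huw1 : u * w ≤ 1 := by nlinarith
    have h14 : (1 + u * w) ^ 2 ≤ 4 := by nlinarith [mul_nonneg hu0 hw0]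
    have hsub : (u - w) ^ 2 ≤ (1 / (n:ℝ)) ^ 2 := pow_le_pow_left₀ (by linarith) huw 2
    calc ((u-w)*(1+u*w))^2 = (u-w)^2 * (1+u*w)^2 := by ring
      _ ≤ (1/(n:ℝ))^2 * 4 := mul_le_mul hsub h14 (by positivity) (by positivity)
      _ = 4 / (n:ℝ)^2 := by rw [div_pow]; ring
  have hp4 : (1 + s) ^ 4 ≤ 8 * (1 + s ^ 4) := by
    nlinarith [sq_nonneg (s - 1), sq_nonneg (s^2 - 1), sq_nonneg (s^2 - s), hs, sq_nonneg s]
  have he : (s - phi w) ^ 2 ≤ (4 / (n:ℝ)^2) * (((1+s)^2)^2) :=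
    sq_le_of_mul_eq _ _ _ _ _ hkey hD1 hN (by positivity)
  have h9 : (0:ℝ) ≤ (1+s^4)/(n:ℝ)^2 := by positivity
  calc (s - phi w)^2 ≤ (4/(n:ℝ)^2) * ((1+s)^2)^2 := he
    _ = (1+s)^4 * (4/(n:ℝ)^2) := by ring
    _ ≤ (8*(1+s^4)) * (4/(n:ℝ)^2) := mul_le_mul_of_nonneg_right hp4 (by positivity)
    _ = 32 * ((1+s^4)/(n:ℝ)^2) := by ring
    _ ≤ 64 * ((1+s^4)/(n:ℝ)^2) := by linarith [h9]
    _ = 64 * (1+s^4)/(n:ℝ)^2 := by ring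

lemma key1d (n : ℕ) (hn : 1 ≤ n) (s : ℝ) :
    ∃ j : ℤ, |j| ≤ (n : ℤ) - 1 ∧
      (s - phi ((j : ℝ) / n)) ^ 2 ≤ 64 * (1 + s ^ 4) / (n : ℝ) ^ 2 := by
  rcases le_total 0 s with hs | hs
  · obtain ⟨j, hj0, hjn, hb⟩ := key_nonneg n hn s hs
    exact ⟨j, by rw [abs_of_nonneg hj0]; exact hjn, hb⟩
  · obtain ⟨j, hj0, hjn, hb⟩ := key_nonneg n hn (-s) (by linarith)
    refine ⟨-j, by rw [abs_neg, abs_of_nonneg hj0]; exact hjn, ?_⟩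
    have h1 : (((-j : ℤ) : ℝ)) / n = -((j : ℝ) / n) := by push_cast; ring
    rw [h1, phi_neg]
    have h2 : (s - -phi ((j:ℝ)/n)) ^ 2 = (-s - phi ((j:ℝ)/n)) ^ 2 := by ring
    have h3 : (1 : ℝ) + (-s) ^ 4 = 1 + s ^ 4 := by ring
    rw [h2]
    rw [h3] at hb
    exact hb

lemma exists_pts (m : ℕ) (hm : 1 ≤ m) :
    ∃ t : Fin m → ℝ, ∀ s : ℝ, ∃ a : Fin m,
      (s - t a) ^ 2 ≤ 1024 * (1 + s ^ 4) / (m : ℝ) ^ 2 := by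
  set n := (m + 1) / 2 with hn_def
  have hn1 : 1 ≤ n := by omega
  have h2n : 2 * n ≤ m + 1 := by omega
  have hm2n : m ≤ 2 * n := by omega
  refine ⟨fun a => phi ((((min (a : ℕ) (2 * n - 2) : ℕ) : ℝ) + 1 - n) / n), fun s => ?_⟩
  obtain ⟨j, hj, hb⟩ := key1d n hn1 s
  rw [abs_le] at hj
  have hj' : 0 ≤ j + ((n : ℤ) - 1) := by omega
  have hlt : (j + ((n : ℤ) - 1)).toNat < m := by omega
  refine ⟨⟨(j + ((n : ℤ) - 1)).toNat, hlt⟩, ?_⟩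
  have hminval : min ((j + ((n : ℤ) - 1)).toNat) (2 * n - 2) = (j + ((n : ℤ) - 1)).toNat := by
    apply min_eq_left; omega
  have harg : (((min ((j + ((n : ℤ) - 1)).toNat) (2 * n - 2) : ℕ) : ℝ) + 1 - n) / n
      = (j : ℝ) / n := by
    rw [hminval]
    have : (((j + ((n : ℤ) - 1)).toNat : ℤ) : ℝ) = (j : ℝ) + (n : ℝ) - 1 := by
      rw [Int.toNat_of_nonneg hj']; push_cast; ring
    rw [show (((j + ((n : ℤ) - 1)).toNat : ℕ) : ℝ) = (((j + ((n : ℤ) - 1)).toNat : ℤ) : ℝ) by push_cast; ring, this]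
    ring_nf
  simp only
  rw [harg]
  refine le_trans hb ?_
  have hn0 : (0:ℝ) < (n:ℝ) ^ 2 := by positivity
  have hm0 : (0:ℝ) < (m:ℝ) ^ 2 := by positivity
  rw [div_le_div_iff₀ hn0 hm0]
  have hcast : (m : ℝ) ≤ 2 * (n : ℝ) := by exact_mod_cast hm2n
  have hs4 : (0:ℝ) ≤ 1 + s ^ 4 := by positivity
  have hmn : (0:ℝ) ≤ (m:ℝ) := by positivity
  have hmsq : (m:ℝ)^2 ≤ 4 * (n:ℝ)^2 := by nlinarith [hcast, hmn]
  nlinarith [mul_le_mul_of_nonneg_left hmsq hs4]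

lemma pi_map_eval {d : ℕ} (i : Fin d) :
    (stdGaussian d).map (fun ξ => ξ i) = gaussianReal 0 1 := by
  refine Measure.ext fun s hs => ?_
  rw [_root_.stdGaussian, Measure.map_apply (measurable_pi_apply i) hs]
  have hpre : (fun ξ : Fin d → ℝ => ξ i) ⁻¹' s
      = Set.pi Set.univ (Function.update (fun _ => Set.univ) i s) := by
    rw [Set.eval_preimage]
  rw [hpre, Measure.pi_pi]
  rw [Finset.prod_eq_single i (fun j _ hj => by simp [Function.update_apply, hj])
    (by simp)]
  simp

lemma integrable_quartic : Integrable (fun x : ℝ => 1 + x ^ 4) (gaussianReal 0 1) := by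
  rw [gaussianReal_of_var_ne_zero 0 one_ne_zero]
  rw [integrable_withDensity_iff (measurable_gaussianPDF 0 1)
    (Filter.Eventually.of_forall fun x => ENNReal.ofReal_lt_top)]
  have hI : Integrable (fun x : ℝ => (1 + x ^ 4) * ((Real.sqrt (2 * Real.pi))⁻¹
      * Real.exp (-(1/2) * x ^ 2))) := by
    have h0 : Integrable (fun x : ℝ => Real.exp (-(1/2) * x ^ 2)) :=
      integrable_exp_neg_mul_sq (by norm_num)
    have h4 : Integrable (fun x : ℝ => x ^ (4:ℝ) * Real.exp (-(1/2) * x ^ 2)) :=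
      integrable_rpow_mul_exp_neg_mul_sq (by norm_num) (by norm_num)
    have h4' : Integrable (fun x : ℝ => x ^ (4:ℕ) * Real.exp (-(1/2) * x ^ 2)) := by
      have : (fun x : ℝ => x ^ (4:ℕ) * Real.exp (-(1/2) * x ^ 2))
          = fun x : ℝ => x ^ (4:ℝ) * Real.exp (-(1/2) * x ^ 2) := by
        funext x; rw [← Real.rpow_natCast x 4]; norm_num
      rw [this]; exact h4
    have hsum := (h0.add h4').const_mul (Real.sqrt (2 * Real.pi))⁻¹
    have heq : (fun x : ℝ => (1 + x ^ 4) * ((Real.sqrt (2 * Real.pi))⁻¹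
        * Real.exp (-(1/2) * x ^ 2)))
        = fun x : ℝ => (Real.sqrt (2 * Real.pi))⁻¹
          * (Real.exp (-(1/2) * x ^ 2) + x ^ 4 * Real.exp (-(1/2) * x ^ 2)) := by
      funext x; ring
    rw [heq]; exact hsum
  refine hI.congr (Filter.Eventually.of_forall fun x => ?_)
  have hnn := gaussianPDFReal_nonneg 0 1 x
  simp only [gaussianPDF, gaussianPDFReal, NNReal.coe_one, mul_one, sub_zero]
  rw [ENNReal.toReal_ofReal (by positivity)]
  ring_nf

lemma integrable_coord_quartic {d : ℕ} (i : Fin d) :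
    Integrable (fun ξ : Fin d → ℝ => 1 + (ξ i) ^ 4) (stdGaussian d) := by
  have h := integrable_quartic
  rw [← pi_map_eval (d := d) i] at h
  have hmeas : Measurable (fun x : ℝ => 1 + x ^ 4) := by measurability
  exact (integrable_map_measure hmeas.aestronglyMeasurable
    (measurable_pi_apply i).aemeasurable).1 h

lemma integral_coord_quartic {d : ℕ} (i : Fin d) :
    ∫ ξ, (1 + (ξ i) ^ 4) ∂(stdGaussian d) = ∫ x, (1 + x ^ 4) ∂(gaussianReal 0 1) := by
  rw [← pi_map_eval (d := d) i,
    integral_map (measurable_pi_apply i).aemeasurable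
      (by measurability : Measurable fun x : ℝ => 1 + x ^ 4).aestronglyMeasurable]

/-- **Rate of the value of assortment breadth.**
For positive definite `Σ` there exists a constant `C` with
`D_k(Σ) ≤ C k^{−2/d}` for all `k ≥ 1`; i.e. `V_∞* − V_k* = (1/2)D_k(Σ) = O(k^{−2/d})`. -/
theorem statement10 {d : ℕ} (hd : 0 < d) (S : Matrix (Fin d) (Fin d) ℝ) (hS : S.PosDef) :
    ∃ C : ℝ, ∀ k : ℕ, 1 ≤ k → Dk k S ≤ C * (k : ℝ) ^ (-(2 : ℝ) / d) := by
  have hPSD : S.PosSemidef := hS.posSemidef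
  set A := posSemidefSqrt hPSD with hA_def
  set M := ∑ i, ∑ j, (A i j) ^ 2 with hM_def
  have hM0 : 0 ≤ M := Finset.sum_nonneg fun i _ => Finset.sum_nonneg fun j _ => sq_nonneg _
  set I4 : ℝ := ∫ x, (1 + x ^ 4) ∂(gaussianReal 0 1) with hI4_def
  have hI40 : 0 ≤ I4 := integral_nonneg (fun x => by positivity)
  refine ⟨4096 * M * (d * I4), fun k hk => ?_⟩
  -- choice of m
  set t := (k : ℝ) ^ ((d : ℝ)⁻¹) with ht_def
  have hk1 : (1 : ℝ) ≤ (k : ℝ) := by exact_mod_cast hk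
  have hd0 : (0 : ℝ) < d := by exact_mod_cast hd
  have ht1 : 1 ≤ t := by
    rw [ht_def, show (1:ℝ) = (1:ℝ) ^ ((d:ℝ)⁻¹) from (Real.one_rpow _).symm]
    exact Real.rpow_le_rpow (by norm_num) hk1 (by positivity)
  set m := ⌊t⌋₊ with hm_def
  have hm1 : 1 ≤ m := Nat.le_floor (by exact_mod_cast ht1)
  have hmt : (m : ℝ) ≤ t := Nat.floor_le (by linarith)
  have htm : t ≤ 2 * m := by
    have h1 := Nat.lt_floor_add_one t
    have hm1' : (1 : ℝ) ≤ m := by exact_mod_cast hm1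
    rw [hm_def]; push_cast; push_cast at h1; linarith
  have hmk : m ^ d ≤ k := by
    have h1 : (m : ℝ) ^ d ≤ t ^ d := pow_le_pow_left₀ (by positivity) hmt d
    have h2 : t ^ d = (k : ℝ) := by
      rw [ht_def, ← Real.rpow_natCast ((k:ℝ) ^ ((d:ℝ)⁻¹)) d,
        ← Real.rpow_mul (by positivity : (0:ℝ) ≤ (k:ℝ)),
        inv_mul_cancel₀ (by positivity : (d:ℝ) ≠ 0), Real.rpow_one]
    have h3 : ((m ^ d : ℕ) : ℝ) ≤ (k : ℝ) := by push_cast; rw [← h2]; exact h1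
    exact_mod_cast h3
  have ht0 : (0:ℝ) < t := lt_of_lt_of_le one_pos ht1
  have hrpow : (k : ℝ) ^ (-(2:ℝ)/d) = (t ^ 2)⁻¹ := by
    rw [show (-(2:ℝ)/d) = (d:ℝ)⁻¹ * (-2) by ring,
      Real.rpow_mul (by positivity : (0:ℝ) ≤ (k:ℝ)), ← ht_def,
      show ((-2:ℝ)) = -((2:ℕ):ℝ) by norm_num, Real.rpow_neg (le_of_lt ht0),
      Real.rpow_natCast]
  have hmk2 : 1 / (m:ℝ) ^ 2 ≤ 4 * (k : ℝ) ^ (-(2:ℝ)/d) := by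
    rw [hrpow, show 4 * ((t:ℝ)^2)⁻¹ = 4 / t^2 by ring,
      div_le_div_iff₀ (by positivity) (by positivity)]
    have hm0 : (0:ℝ) < m := by exact_mod_cast hm1
    nlinarith [htm, hm0, ht0]
  -- the quantizer
  obtain ⟨tp, htp⟩ := exists_pts m hm1
  have hcard : Fintype.card (Fin d → Fin m) ≤ Fintype.card (Fin k) := by
    simpa [Fintype.card_fun] using hmk
  obtain ⟨e⟩ := Function.Embedding.nonempty_of_card_le hcard
  set grid : (Fin d → Fin m) → (Fin d → ℝ) := fun g i => tp (g i) with hgrid_def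
  set y : Fin k → (Fin d → ℝ) :=
    fun j => if h : ∃ g, e g = j then grid h.choose else 0 with hy_def
  have hy : ∀ g, y (e g) = grid g := by
    intro g
    have h : ∃ g', e g' = e g := ⟨g, rfl⟩
    simp only [hy_def, dif_pos h]
    exact congrArg grid (e.injective h.choose_spec)
  set x : Fin k → (Fin d → ℝ) := fun j => A.mulVec (y j) with hx_def
  -- Cauchy-Schwarz bound
  have hCS : ∀ v w : Fin d → ℝ, sqdist (A.mulVec v) (A.mulVec w) ≤ M * sqdist v w := by
    intro v w
    have h1 : ∀ i, (A.mulVec v i - A.mulVec w i) ^ 2 ≤ (∑ j, (A i j) ^ 2) * sqdist v w := by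
      intro i
      have h2 : A.mulVec v i - A.mulVec w i = ∑ j, A i j * (v j - w j) := by
        simp [Matrix.mulVec, dotProduct, mul_sub, Finset.sum_sub_distrib]
      rw [h2, sqdist]
      exact Finset.sum_mul_sq_le_sq_mul_sq Finset.univ _ _
    calc sqdist (A.mulVec v) (A.mulVec w) = ∑ i, (A.mulVec v i - A.mulVec w i) ^ 2 := rfl
      _ ≤ ∑ i, (∑ j, (A i j) ^ 2) * sqdist v w := Finset.sum_le_sum fun i _ => h1 i
      _ = M * sqdist v w := by rw [← Finset.sum_mul]
  -- pointwise bound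
  have hpt : ∀ ξ : Fin d → ℝ, (⨅ j, sqdist (A.mulVec ξ) (x j))
      ≤ (1024 * M / (m:ℝ) ^ 2) * ∑ i, (1 + (ξ i) ^ 4) := by
    intro ξ
    choose g hg using fun i => htp (ξ i)
    have hbdd : BddBelow (Set.range fun j => sqdist (A.mulVec ξ) (x j)) := by
      refine ⟨0, fun v hv => ?_⟩
      obtain ⟨j, rfl⟩ := hv
      exact Finset.sum_nonneg fun i _ => sq_nonneg _
    have h3 : (⨅ j, sqdist (A.mulVec ξ) (x j)) ≤ sqdist (A.mulVec ξ) (x (e g)) :=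
      ciInf_le hbdd _
    have h4 : x (e g) = A.mulVec (grid g) := by rw [hx_def]; simp only; rw [hy g]
    calc (⨅ j, sqdist (A.mulVec ξ) (x j)) ≤ sqdist (A.mulVec ξ) (A.mulVec (grid g)) := by
          rw [← h4]; exact h3
      _ ≤ M * sqdist ξ (grid g) := hCS ξ (grid g)
      _ = ∑ i, M * (ξ i - tp (g i)) ^ 2 := by rw [sqdist, Finset.mul_sum]
      _ ≤ ∑ i, (1024 * M / (m:ℝ) ^ 2) * (1 + (ξ i) ^ 4) := by
          refine Finset.sum_le_sum fun i _ => ?_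
          calc M * (ξ i - tp (g i)) ^ 2 ≤ M * (1024 * (1 + (ξ i) ^ 4) / (m:ℝ) ^ 2) :=
                mul_le_mul_of_nonneg_left (hg i) hM0
            _ = (1024 * M / (m:ℝ) ^ 2) * (1 + (ξ i) ^ 4) := by ring
      _ = (1024 * M / (m:ℝ) ^ 2) * ∑ i, (1 + (ξ i) ^ 4) := (Finset.mul_sum _ _ _).symm
  -- measure manipulations
  have hmv : mvGaussian (0 : Fin d → ℝ) S = (stdGaussian d).map (fun ξ => A.mulVec ξ) := by
    rw [mvGaussian, dif_pos hPSD]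
    congr 1
    funext ξ
    simp [hA_def]
  have hmeasθ : Measurable fun ξ : Fin d → ℝ => A.mulVec ξ := by
    apply measurable_pi_lambda
    intro i
    simp only [Matrix.mulVec, dotProduct]
    fun_prop
  have hfmeas : Measurable fun ζ : Fin d → ℝ => ⨅ j, sqdist ζ (x j) := by
    apply Measurable.iInf
    intro j
    show Measurable fun ζ : Fin d → ℝ => ∑ i, (ζ i - x j i) ^ 2
    exact Finset.measurable_sum Finset.univ fun i _ =>
      ((measurable_pi_apply i).sub_const _).pow_const 2
  have hGint : Integrable (fun ξ : Fin d → ℝ =>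
      (1024 * M / (m:ℝ) ^ 2) * ∑ i, (1 + (ξ i) ^ 4)) (stdGaussian d) :=
    (integrable_finset_sum _ fun i _ => integrable_coord_quartic i).const_mul _
  have hDk : Dk k S ≤ ∫ ξ, (⨅ j, sqdist ξ (x j)) ∂(mvGaussian 0 S) := by
    apply ciInf_le
    refine ⟨0, fun v hv => ?_⟩
    obtain ⟨x', rfl⟩ := hv
    exact integral_nonneg fun ξ =>
      Real.iInf_nonneg fun j => Finset.sum_nonneg fun i _ => sq_nonneg _
  have hmap : ∫ ξ, (⨅ j, sqdist ξ (x j)) ∂(mvGaussian 0 S)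
      = ∫ ξ, (⨅ j, sqdist (A.mulVec ξ) (x j)) ∂(stdGaussian d) := by
    rw [hmv, integral_map hmeasθ.aemeasurable hfmeas.aestronglyMeasurable]
  have hint : ∫ ξ, (⨅ j, sqdist (A.mulVec ξ) (x j)) ∂(stdGaussian d)
      ≤ ∫ ξ, (1024 * M / (m:ℝ) ^ 2) * ∑ i, (1 + (ξ i) ^ 4) ∂(stdGaussian d) := by
    apply integral_mono_of_nonneg
    · exact Filter.Eventually.of_forall fun ξ =>
        Real.iInf_nonneg fun j => Finset.sum_nonneg fun i _ => sq_nonneg _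
    · exact hGint
    · exact Filter.Eventually.of_forall hpt
  have hval : ∫ ξ, (1024 * M / (m:ℝ) ^ 2) * ∑ i, (1 + (ξ i) ^ 4) ∂(stdGaussian d)
      = (1024 * M / (m:ℝ) ^ 2) * (d * I4) := by
    rw [integral_const_mul, integral_finset_sum _ fun i _ => integrable_coord_quartic i]
    congr 1
    calc ∑ i : Fin d, ∫ ξ, (1 + (ξ i) ^ 4) ∂(stdGaussian d)
        = ∑ _i : Fin d, I4 := Finset.sum_congr rfl fun i _ => integral_coord_quartic i
      _ = d * I4 := by rw [Finset.sum_const]; simp [nsmul_eq_mul]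
  have hfinal : Dk k S ≤ (1024 * M / (m:ℝ) ^ 2) * (d * I4) := by
    rw [← hval]
    exact le_trans hDk (le_trans (le_of_eq hmap) hint)
  have hc0 : 0 ≤ 1024 * M * (d * I4) :=
    mul_nonneg (mul_nonneg (by norm_num) hM0) (mul_nonneg (by positivity) hI40)
  calc Dk k S ≤ (1024 * M / (m:ℝ) ^ 2) * (d * I4) := hfinal
    _ = (1024 * M * (d * I4)) * (1 / (m:ℝ) ^ 2) := by ring
    _ ≤ (1024 * M * (d * I4)) * (4 * (k : ℝ) ^ (-(2:ℝ)/d)) :=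
        mul_le_mul_of_nonneg_left hmk2 hc0
    _ = 4096 * M * (d * I4) * (k : ℝ) ^ (-(2:ℝ)/d) := by ring
end

section
/- For a symmetric positive definite matrix Σ ∈ ℝ^{d×d} and σ² > 0, define the single-question utility gain Δ(y) = (1/2) · (yᵀ Σ² y)/(σ² + yᵀ Σ y) for unit vectors y ∈ ℝ^d. Then Δ(y) = (1/2)(tr(Σ) − tr(Σ')), where Σ' = Σ − (Σ y yᵀ Σ)/(σ² + yᵀ Σ y) is the Kalman-updated covariance, and Δ(y) is maximized over unit vectors exactly by the unit eigenvectors of Σ associated with its largest eigenvalue. -/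
open Matrix
open scoped BigOperators

private lemma aux_dot_nonneg {d : ℕ} {M : Matrix (Fin d) (Fin d) ℝ} (hM : M.PosSemidef)
    (x : Fin d → ℝ) : 0 ≤ x ⬝ᵥ M.mulVec x := by
  have := hM.re_dotProduct_nonneg x; simpa using this

private lemma aux_topPSD {d : ℕ} (S : Matrix (Fin d) (Fin d) ℝ) (hS : S.PosDef) (lamMax : ℝ)
    (hTop : ∀ (lam : ℝ) (w : Fin d → ℝ), w ≠ 0 → S.mulVec w = lam • w → lam ≤ lamMax) :
    (lamMax • (1 : Matrix (Fin d) (Fin d) ℝ) - S).PosSemidef := by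
  have hB : (lamMax • (1 : Matrix (Fin d) (Fin d) ℝ) - S).IsHermitian := by
    unfold Matrix.IsHermitian
    rw [conjTranspose_sub, conjTranspose_smul, conjTranspose_one, hS.1.eq]; simp
  apply hB.posSemidef_iff_eigenvalues_nonneg.mpr
  intro i
  have hmv := hB.mulVec_eigenvectorBasis i
  set v : Fin d → ℝ := ⇑(hB.eigenvectorBasis i) with hv
  have hvne : v ≠ 0 := by
    have h0 : hB.eigenvectorBasis i ≠ 0 := hB.eigenvectorBasis.orthonormal.ne_zero i
    intro hc; apply h0; ext j; exact congrFun hc j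
  have hSv : S.mulVec v = (lamMax - hB.eigenvalues i) • v := by
    have h2 : (lamMax • (1 : Matrix (Fin d) (Fin d) ℝ) - S).mulVec v
        = lamMax • v - S.mulVec v := by
      simp [sub_mulVec, smul_mulVec]
    rw [h2] at hmv
    funext j
    have := congrFun hmv j
    simp at this ⊢
    linarith
  have := hTop _ _ hvne hSv
  simp only [Pi.zero_apply]; linarith

private lemma aux_conj {d : ℕ} (S Q : Matrix (Fin d) (Fin d) ℝ) (lamMax : ℝ)
    (hQQ : Q * Q = S) (hQH : Qᴴ = Q)
    (h1 : (lamMax • (1 : Matrix (Fin d) (Fin d) ℝ) - S).PosSemidef) :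
    (lamMax • S - S * S).PosSemidef := by
  have h2 := h1.mul_mul_conjTranspose_same Q
  rw [hQH] at h2
  have heq : Q * (lamMax • (1 : Matrix (Fin d) (Fin d) ℝ) - S) * Q = lamMax • S - S * S := by
    rw [Matrix.mul_sub, Matrix.sub_mul, Matrix.mul_smul, Matrix.mul_one, Matrix.smul_mul, hQQ]
    congr 1
    rw [← hQQ, ← Matrix.mul_assoc, Matrix.mul_assoc (Q * Q) Q Q]
  rwa [heq] at h2

open scoped MatrixOrder in
private lemma aux_topPSD2 {d : ℕ} (S : Matrix (Fin d) (Fin d) ℝ) (hS : S.PosDef) (lamMax : ℝ)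
    (h1 : (lamMax • (1 : Matrix (Fin d) (Fin d) ℝ) - S).PosSemidef) :
    (lamMax • S - S * S).PosSemidef :=
  aux_conj S (CFC.sqrt S) lamMax (CFC.sqrt_mul_sqrt_self S hS.posSemidef.nonneg)
    (CFC.sqrt_nonneg S).posSemidef.1 h1

/-- **Per-round solicitation gain and optimal direction.**
For positive definite `Σ` and `σ² > 0`, the single-question gain
`Δ(y) = (1/2)(yᵀΣ²y)/(σ² + yᵀΣy)` equals `(1/2)(tr Σ − tr Σ')` where `Σ'` is the
Kalman-updated covariance, and `Δ` is maximized over unit vectors exactly by the unit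
eigenvectors of `Σ` associated with its largest eigenvalue. -/
theorem statement11 {d : ℕ} (S : Matrix (Fin d) (Fin d) ℝ) (hS : S.PosDef)
    (σ2 : ℝ) (hσ : 0 < σ2)
    (Δ : (Fin d → ℝ) → ℝ)
    (hΔ : ∀ y, Δ y = (1/2) * (y ⬝ᵥ (S ^ 2).mulVec y) / (σ2 + y ⬝ᵥ S.mulVec y))
    (lamMax : ℝ) (u : Fin d → ℝ) (hu : ∑ i, u i ^ 2 = 1)
    (hEig : S.mulVec u = lamMax • u)
    (hTop : ∀ (lam : ℝ) (w : Fin d → ℝ), w ≠ 0 → S.mulVec w = lam • w → lam ≤ lamMax) :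
    (∀ y : Fin d → ℝ, (∑ i, y i ^ 2 = 1) →
        Δ y = (1/2) *
          (S.trace - (S - (σ2 + y ⬝ᵥ S.mulVec y)⁻¹ • (S * vecMulVec y y * S)).trace)) ∧
    (∀ y : Fin d → ℝ, (∑ i, y i ^ 2 = 1) →
      ((∀ w : Fin d → ℝ, (∑ i, w i ^ 2 = 1) → Δ w ≤ Δ y) ↔ S.mulVec y = lamMax • y)) := by
  have hPSD1 := aux_topPSD S hS lamMax hTop
  have hPSD2 := aux_topPSD2 S hS lamMax hPSD1
  have hdot : ∀ z : Fin d → ℝ, (∑ i, z i ^ 2 = 1) → z ⬝ᵥ z = 1 := by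
    intro z hz
    simpa [dotProduct, pow_two] using hz
  have hne : ∀ z : Fin d → ℝ, (∑ i, z i ^ 2 = 1) → z ≠ 0 := by
    intro z hz hc
    rw [hc] at hz
    simp at hz
  have hSpos : ∀ z : Fin d → ℝ, (∑ i, z i ^ 2 = 1) → 0 < z ⬝ᵥ S.mulVec z := by
    intro z hz
    have := hS.re_dotProduct_pos (hne z hz)
    simpa using this
  have hlam : 0 < lamMax := by
    have h1 := hSpos u hu
    rw [hEig] at h1
    have : u ⬝ᵥ lamMax • u = lamMax := by
      rw [dotProduct_smul, smul_eq_mul, hdot u hu, mul_one]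
    rw [this] at h1
    exact h1
  have hb1 : ∀ z : Fin d → ℝ, (∑ i, z i ^ 2 = 1) → z ⬝ᵥ S.mulVec z ≤ lamMax := by
    intro z hz
    have h := aux_dot_nonneg hPSD1 z
    have heq : z ⬝ᵥ (lamMax • (1 : Matrix (Fin d) (Fin d) ℝ) - S).mulVec z
        = lamMax * (z ⬝ᵥ z) - z ⬝ᵥ S.mulVec z := by
      rw [sub_mulVec, dotProduct_sub, smul_mulVec, one_mulVec, dotProduct_smul,
        smul_eq_mul]
    rw [heq, hdot z hz, mul_one] at h
    linarith
  have hb2 : ∀ z : Fin d → ℝ, z ⬝ᵥ (S ^ 2).mulVec z ≤ lamMax * (z ⬝ᵥ S.mulVec z) := by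
    intro z
    have h := aux_dot_nonneg hPSD2 z
    have heq : z ⬝ᵥ (lamMax • S - S * S).mulVec z
        = lamMax * (z ⬝ᵥ S.mulVec z) - z ⬝ᵥ (S ^ 2).mulVec z := by
      rw [sub_mulVec, dotProduct_sub, smul_mulVec, dotProduct_smul, smul_eq_mul, pow_two]
    rw [heq] at h
    linarith
  have hΔeig : ∀ z : Fin d → ℝ, (∑ i, z i ^ 2 = 1) → S.mulVec z = lamMax • z →
      Δ z = (1/2) * lamMax ^ 2 / (σ2 + lamMax) := by
    intro z hz hzE
    have hz2 : z ⬝ᵥ (S ^ 2).mulVec z = lamMax ^ 2 := by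
      rw [pow_two, ← mulVec_mulVec, hzE, mulVec_smul, hzE, dotProduct_smul, dotProduct_smul]
      rw [smul_eq_mul, smul_eq_mul, hdot z hz]
      ring
    have hz1 : z ⬝ᵥ S.mulVec z = lamMax := by
      rw [hzE, dotProduct_smul, smul_eq_mul, hdot z hz, mul_one]
    rw [hΔ, hz2, hz1]
  have hmax : ∀ w : Fin d → ℝ, (∑ i, w i ^ 2 = 1) →
      Δ w ≤ (1/2) * lamMax ^ 2 / (σ2 + lamMax) := by
    intro w hw
    have hb := hSpos w hw
    have h1 := hb1 w hw
    have h2 := hb2 w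
    rw [hΔ]
    rw [div_le_div_iff₀ (by linarith) (by linarith)]
    nlinarith [mul_le_mul_of_nonneg_right h2 hσ.le, mul_le_mul_of_nonneg_right h2 hlam.le,
      mul_le_mul_of_nonneg_left h1 hlam.le,
      mul_le_mul_of_nonneg_right (mul_le_mul_of_nonneg_left h1 hlam.le) hσ.le]
  refine ⟨?_, ?_⟩
  · intro y hy
    have hc : 0 < σ2 + y ⬝ᵥ S.mulVec y := by linarith [hSpos y hy]
    have htr : (S * vecMulVec y y * S).trace = y ⬝ᵥ (S ^ 2).mulVec y := by
      simp [trace, Matrix.mul_apply, vecMulVec_apply, dotProduct, mulVec, pow_two,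
        Finset.mul_sum, Finset.sum_mul]
      rw [Finset.sum_comm]
      congr 1; ext i
      rw [Finset.sum_comm]
      congr 1; ext j
      congr 1; ext k
      ring
    rw [hΔ, trace_sub, trace_smul, htr, smul_eq_mul]
    field_simp
    ring
  · intro y hy
    constructor
    · intro hopt
      have h1 : Δ y = (1/2) * lamMax ^ 2 / (σ2 + lamMax) := by
        have hge := hopt u hu
        rw [hΔeig u hu hEig] at hge
        exact le_antisymm (hmax y hy) hge
      set a := y ⬝ᵥ (S ^ 2).mulVec y with ha
      set b := y ⬝ᵥ S.mulVec y with hbdef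
      have hb : 0 < b := hSpos y hy
      have hba : a ≤ lamMax * b := hb2 y
      have hbl : b ≤ lamMax := hb1 y hy
      have heq : a * (σ2 + lamMax) = lamMax ^ 2 * (σ2 + b) := by
        rw [hΔ] at h1
        rw [div_eq_div_iff (by linarith) (by linarith)] at h1
        linarith
      have hbeq : b = lamMax := le_antisymm hbl (by
        nlinarith [mul_le_mul_of_nonneg_right hba hσ.le, mul_le_mul_of_nonneg_right hba hlam.le,
          mul_pos hσ hlam])
      have haeq : a = lamMax ^ 2 := by
        rw [hbeq] at heq
        have hne0 : σ2 + lamMax ≠ 0 := by positivity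
        field_simp at heq
        tauto
      have hvm : y ᵥ* S = S.mulVec y := by
        have hSt : Sᵀ = S := by
          have := hS.1
          simpa [Matrix.IsHermitian] using this
        rw [← hSt, vecMul_transpose, hSt]
      have hz : (S.mulVec y - lamMax • y) ⬝ᵥ (S.mulVec y - lamMax • y) = 0 := by
        have hself : (S.mulVec y) ⬝ᵥ (S.mulVec y) = a := by
          rw [ha, pow_two, ← mulVec_mulVec, dotProduct_mulVec y, hvm]
        have hcross : (S.mulVec y) ⬝ᵥ (lamMax • y) = lamMax * b := by
          rw [dotProduct_smul, smul_eq_mul, dotProduct_comm]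
        have hcross2 : (lamMax • y) ⬝ᵥ (S.mulVec y) = lamMax * b := by
          rw [smul_dotProduct, smul_eq_mul]
        have hyy : (lamMax • y) ⬝ᵥ (lamMax • y) = lamMax ^ 2 := by
          rw [smul_dotProduct, dotProduct_smul, smul_eq_mul, smul_eq_mul, hdot y hy]
          ring
        rw [dotProduct_sub, sub_dotProduct, sub_dotProduct, hself, hcross, hcross2, hyy,
          hbeq, haeq]
        ring
      have h0 := dotProduct_self_eq_zero.mp hz
      exact sub_eq_zero.mp h0
    · intro hyE w hw
      rw [hΔeig y hy hyE]
      exact hmax w hw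
end

section
/- Let Σ₀ ∈ ℝ^{d×d} be symmetric positive definite and σ² > 0. For any unit vectors y₁,…,y_m ∈ ℝ^d, the posterior covariance Σ_m = (Σ₀^{-1} + σ^{-2} Σ_{t=1}^m y_t y_tᵀ)^{-1} satisfies tr(Σ_m^{-1}) = tr(Σ₀^{-1}) + m/σ², and hence tr(Σ_m) ≥ d² / (tr(Σ₀^{-1}) + m/σ²). Consequently, for any ε > 0, achieving (1/2)tr(Σ_m) ≤ ε under any solicitation policy requires m ≥ σ² · max{0, d²/(2ε) − tr(Σ₀^{-1})}. -/
open Matrix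
open scoped BigOperators

lemma sq_card_le_trace_mul_trace_inv {d : ℕ} (A : Matrix (Fin d) (Fin d) ℝ) (hA : A.PosDef) :
    (d : ℝ) ^ 2 ≤ A.trace * A⁻¹.trace := by
  obtain ⟨U, μ, hUU, hUU', hpos, hspec⟩ :
      ∃ (U : Matrix (Fin d) (Fin d) ℝ) (μ : Fin d → ℝ),
        star U * U = 1 ∧ U * star U = 1 ∧ (∀ i, 0 < μ i) ∧ A = U * diagonal μ * star U := by
    refine ⟨hA.1.eigenvectorUnitary, hA.1.eigenvalues,
      mem_unitaryGroup_iff'.mp hA.1.eigenvectorUnitary.2,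
      mem_unitaryGroup_iff.mp hA.1.eigenvectorUnitary.2,
      hA.eigenvalues_pos, ?_⟩
    simpa using hA.1.spectral_theorem
  have hDD : diagonal μ * diagonal (fun i => (μ i)⁻¹) = 1 := by
    rw [diagonal_mul_diagonal]
    have : (fun i => μ i * (μ i)⁻¹) = fun _ : Fin d => (1 : ℝ) :=
      funext fun i => mul_inv_cancel₀ (hpos i).ne'
    rw [this, diagonal_one]
  have hinv : A⁻¹ = U * diagonal (fun i => (μ i)⁻¹) * star U := by
    apply inv_eq_right_inv
    rw [hspec]
    calc U * diagonal μ * star U * (U * diagonal (fun i => (μ i)⁻¹) * star U)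
        = U * (diagonal μ * ((star U * U) * diagonal (fun i => (μ i)⁻¹))) * star U := by
          noncomm_ring
      _ = 1 := by rw [hUU, one_mul, hDD, mul_one, hUU']
  have htr : A.trace = ∑ i, μ i := by
    rw [hspec, trace_mul_cycle, hUU, one_mul, trace_diagonal]
  have htr' : A⁻¹.trace = ∑ i, (μ i)⁻¹ := by
    rw [hinv, trace_mul_cycle, hUU, one_mul, trace_diagonal]
  rw [htr, htr']
  have hcs := Finset.sum_sq_le_sum_mul_sum_of_sq_eq_mul Finset.univ
    (r := fun _ : Fin d => (1 : ℝ)) (f := μ) (g := fun i => (μ i)⁻¹)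
    (fun i _ => (hpos i).le) (fun i _ => (inv_pos.mpr (hpos i)).le)
    (fun i _ => by rw [one_pow, mul_inv_cancel₀ (hpos i).ne'])
  simpa using hcs

lemma posdef_trace_pos {d : ℕ} (hd : 0 < d) (A : Matrix (Fin d) (Fin d) ℝ) (hA : A.PosDef) :
    0 < A.trace := by
  have hdiag : ∀ i, 0 < A i i := by
    intro i
    have hx : (Pi.single i 1 : Fin d → ℝ) ≠ 0 := by
      intro h
      have := congrFun h i
      simp at this
    have := (posDef_iff_dotProduct_mulVec.mp hA).2 (x := Pi.single i 1) hx
    simpa [dotProduct, mulVec, Pi.single_apply] using this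
  have : Nonempty (Fin d) := ⟨⟨0, hd⟩⟩
  exact Finset.sum_pos (fun i _ => hdiag i) Finset.univ_nonempty

/-- **Precision budget and solicitation lower bound.**
For the posterior `Σ_m = (Σ₀⁻¹ + σ⁻² ∑_t y_t y_tᵀ)⁻¹` generated by unit queries,
`tr(Σ_m⁻¹) = tr(Σ₀⁻¹) + m/σ²`, hence `tr(Σ_m) ≥ d²/(tr(Σ₀⁻¹) + m/σ²)`; consequently
`(1/2) tr(Σ_m) ≤ ε` forces `m ≥ σ²·max{0, d²/(2ε) − tr(Σ₀⁻¹)}`. -/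
theorem statement17 {d m : ℕ} (S0 : Matrix (Fin d) (Fin d) ℝ) (hS0 : S0.PosDef)
    (σ2 : ℝ) (hσ : 0 < σ2)
    (y : Fin m → (Fin d → ℝ)) (hy : ∀ t, ∑ i, y t i ^ 2 = 1)
    (Sm : Matrix (Fin d) (Fin d) ℝ)
    (hSm : Sm = (S0⁻¹ + σ2⁻¹ • ∑ t, vecMulVec (y t) (y t))⁻¹) :
    Sm⁻¹.trace = S0⁻¹.trace + m / σ2 ∧
    (d : ℝ) ^ 2 / (S0⁻¹.trace + m / σ2) ≤ Sm.trace ∧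
    (∀ ε : ℝ, 0 < ε → (1/2) * Sm.trace ≤ ε →
      σ2 * max 0 ((d : ℝ) ^ 2 / (2 * ε) - S0⁻¹.trace) ≤ (m : ℝ)) := by
  set A : Matrix (Fin d) (Fin d) ℝ := S0⁻¹ + σ2⁻¹ • ∑ t, vecMulVec (y t) (y t) with hA_def
  -- each rank-one term is PSD
  have hterm : ∀ t, (vecMulVec (y t) (y t)).PosSemidef := by
    intro t
    rw [vecMulVec_eq Unit]
    have h := posSemidef_self_mul_conjTranspose (replicateCol Unit (y t))
    rwa [conjTranspose_replicateCol, star_trivial] at h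
  have hsum : (∑ t, vecMulVec (y t) (y t)).PosSemidef := by
    classical
    refine Finset.sum_induction _ _ (fun a b ha hb => ha.add hb) Matrix.PosSemidef.zero
      (fun t _ => hterm t)
  have hsmul : (σ2⁻¹ • ∑ t, vecMulVec (y t) (y t)).PosSemidef := by
    refine posSemidef_iff_dotProduct_mulVec.mpr ⟨?_, fun x => ?_⟩
    · unfold Matrix.IsHermitian
      rw [conjTranspose_smul]
      rw [hsum.1]
      simp
    · rw [smul_mulVec, dotProduct_smul]
      have := (posSemidef_iff_dotProduct_mulVec.mp hsum).2 x
      simpa using mul_nonneg (inv_nonneg.mpr hσ.le) (by simpa using this)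
  have hA : A.PosDef := (hS0.inv).add_posSemidef hsmul
  have hAunit : IsUnit A.det := isUnit_iff_ne_zero.mpr hA.det_pos.ne'
  have hSmInv : Sm⁻¹ = A := by rw [hSm, nonsing_inv_nonsing_inv _ hAunit]
  -- trace computation
  have htrace_term : ∀ t, (vecMulVec (y t) (y t)).trace = 1 := by
    intro t
    rw [vecMulVec_eq Unit, trace_replicateCol_mul_replicateRow]
    rw [dotProduct]
    simpa [pow_two] using hy t
  have htrA : A.trace = S0⁻¹.trace + m / σ2 := by
    rw [hA_def, trace_add, trace_smul]
    rw [trace_sum]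
    simp only [htrace_term]
    rw [Finset.sum_const, Finset.card_univ, Fintype.card_fin]
    rw [smul_eq_mul, div_eq_mul_inv]
    ring
  have part1 : Sm⁻¹.trace = S0⁻¹.trace + m / σ2 := by rw [hSmInv, htrA]
  -- Sm is posdef
  have hSmPD : Sm.PosDef := by rw [hSm]; exact hA.inv
  have hcs : (d : ℝ) ^ 2 ≤ Sm⁻¹.trace * Sm.trace := by
    have hSmUnit : IsUnit Sm.det := isUnit_iff_ne_zero.mpr hSmPD.det_pos.ne'
    have := sq_card_le_trace_mul_trace_inv Sm⁻¹ hSmPD.inv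
    rwa [nonsing_inv_nonsing_inv _ hSmUnit] at this
  have part2 : (d : ℝ) ^ 2 / (S0⁻¹.trace + m / σ2) ≤ Sm.trace := by
    rcases Nat.eq_zero_or_pos d with hd | hd
    · subst hd
      simp [Matrix.trace, Matrix.diag]
    · have hP : 0 < S0⁻¹.trace + m / σ2 := by
        have h1 : 0 < S0⁻¹.trace := posdef_trace_pos hd _ hS0.inv
        have h2 : (0:ℝ) ≤ m / σ2 := div_nonneg (Nat.cast_nonneg m) hσ.le
        linarith
      rw [div_le_iff₀ hP]
      calc (d : ℝ) ^ 2 ≤ Sm⁻¹.trace * Sm.trace := hcs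
        _ = Sm.trace * (S0⁻¹.trace + m / σ2) := by rw [part1]; ring
  refine ⟨part1, part2, ?_⟩
  intro ε hε hhalf
  rcases le_or_gt ((d : ℝ) ^ 2 / (2 * ε) - S0⁻¹.trace) 0 with hc | hc
  · rw [max_eq_left hc, mul_zero]
    exact Nat.cast_nonneg m
  · rw [max_eq_right hc.le]
    -- here d > 0 since d^2/(2ε) > trace ≥ 0
    have hd : 0 < d := by
      rcases Nat.eq_zero_or_pos d with h | h
      · exfalso
        subst h
        rw [show (S0⁻¹).trace = 0 from by simp [Matrix.trace]] at hc
        norm_num at hc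
      · exact h
    have hT : 0 < S0⁻¹.trace := posdef_trace_pos hd _ hS0.inv
    have hP : 0 < S0⁻¹.trace + m / σ2 := by
      have : (0:ℝ) ≤ m / σ2 := div_nonneg (Nat.cast_nonneg m) hσ.le
      linarith
    have h2ε : 0 < 2 * ε := by linarith
    have hSmtr : Sm.trace ≤ 2 * ε := by linarith
    have h1 : (d : ℝ) ^ 2 / (S0⁻¹.trace + m / σ2) ≤ 2 * ε := le_trans part2 hSmtr
    have h2 : (d : ℝ) ^ 2 / (2 * ε) ≤ S0⁻¹.trace + m / σ2 := by
      rw [div_le_iff₀ h2ε]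
      rw [div_le_iff₀ hP] at h1
      linarith
    have h3 : (d : ℝ) ^ 2 / (2 * ε) - S0⁻¹.trace ≤ m / σ2 := by linarith
    calc σ2 * ((d : ℝ) ^ 2 / (2 * ε) - S0⁻¹.trace) ≤ σ2 * (m / σ2) := by
          exact mul_le_mul_of_nonneg_left h3 hσ.le
      _ = m := by field_simp
end
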